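/- For a prime number p, the group algebra ℤ_(p)[C_p], where ℤ_(p) is the localization of ℤ at the prime ideal (p), has no idempotent elements other than 0 and 1; equivalently, ℤ_(p)[C_p] is indecomposable as a module over itself. -/

import Mathlib

theorem Int.span_singleton_prime_isPrime (p : ℕ) (hp : p.Prime) :
    (Ideal.span {(p : ℤ)}).IsPrime := by
  rw [Ideal.span_singleton_prime (by exact_mod_cast hp.ne_zero : (p : ℤ) ≠ 0)]
  exact Nat.prime_iff_prime_int.mp hp

/-- The localization of `ℤ` at the prime ideal `(p)`. -/
abbrev IntLocAtPrime (p : ℕ) (hp : p.Prime) : Type :=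
  @Localization.AtPrime ℤ _ (Ideal.span {(p : ℤ)}) (Int.span_singleton_prime_isPrime p hp)

section aux

variable (p : ℕ) (hp : p.Prime)

-- sanity checks for instances
example : IsDomain (IntLocAtPrime p hp) := inferInstance

example : IsNoetherianRing (IntLocAtPrime p hp) := by
  haveI := Int.span_singleton_prime_isPrime p hp
  exact IsLocalization.isNoetherianRing (Ideal.span {(p : ℤ)}).primeCompl _ inferInstance

end aux

section main

variable (p : ℕ) (hp : p.Prime)

open MonoidAlgebra Finsupp

namespace GpAlgAux

local notation "R" => IntLocAtPrime p hp
local notation "G" => Multiplicative (ZMod p)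
local notation "A" => MonoidAlgebra (IntLocAtPrime p hp) (Multiplicative (ZMod p))

noncomputable def f : IntLocAtPrime p hp →+* ZMod p := by
  haveI := Int.span_singleton_prime_isPrime p hp
  haveI : Fact p.Prime := ⟨hp⟩
  exact IsLocalization.lift (M := (Ideal.span {(p : ℤ)}).primeCompl)
    (g := Int.castRingHom (ZMod p)) (by
      rintro ⟨s, hs⟩
      have hs' : ¬ (p : ℤ) ∣ s := fun h => hs (Ideal.mem_span_singleton.mpr h)
      have : ((s : ℤ) : ZMod p) ≠ 0 := by
        rw [Ne, ZMod.intCast_zmod_eq_zero_iff_dvd]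
        exact hs'
      exact this.isUnit)

lemma f_algebraMap (x : ℤ) : f p hp (algebraMap ℤ (IntLocAtPrime p hp) x) = (x : ZMod p) := by
  haveI := Int.span_singleton_prime_isPrime p hp
  exact IsLocalization.lift_eq _ x

lemma exists_of_f_eq_zero (a : IntLocAtPrime p hp) (ha : f p hp a = 0) :
    ∃ c, a = (p : IntLocAtPrime p hp) * c := by
  haveI := Int.span_singleton_prime_isPrime p hp
  haveI : Fact p.Prime := ⟨hp⟩
  obtain ⟨⟨x, s⟩, hx⟩ := IsLocalization.surj (Ideal.span {(p : ℤ)}).primeCompl a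
  simp only at hx
  have hu : IsUnit (algebraMap ℤ (IntLocAtPrime p hp) s) :=
    IsLocalization.map_units _ s
  have hfx : (x : ZMod p) = 0 := by
    have := congrArg (f p hp) hx
    rw [map_mul, ha, zero_mul, f_algebraMap] at this
    exact this.symm
  obtain ⟨y, hy⟩ := (ZMod.intCast_zmod_eq_zero_iff_dvd x p).mp hfx
  refine ⟨hu.unit⁻¹ * algebraMap ℤ _ y, ?_⟩
  have ha' : a = hu.unit⁻¹ * algebraMap ℤ _ x := by
    rw [Units.eq_inv_mul_iff_mul_eq, IsUnit.unit_spec, mul_comm]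
    exact hx
  rw [ha', hy]
  push_cast
  ring

noncomputable def F : MonoidAlgebra (IntLocAtPrime p hp) (Multiplicative (ZMod p)) →+*
    MonoidAlgebra (ZMod p) (Multiplicative (ZMod p)) :=
  MonoidAlgebra.liftNCRingHom (MonoidAlgebra.singleOneRingHom.comp (f p hp))
    (MonoidAlgebra.of (ZMod p) (Multiplicative (ZMod p))) (fun _ _ => Commute.all _ _)

lemma F_single (g : Multiplicative (ZMod p)) (a : IntLocAtPrime p hp) :
    F p hp (MonoidAlgebra.single g a) = MonoidAlgebra.single g (f p hp a) := by
  simp only [F, MonoidAlgebra.liftNCRingHom, RingHom.coe_mk, MonoidHom.coe_mk, OneHom.coe_mk,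
    RingHom.coe_comp, Function.comp_apply]
  show MonoidAlgebra.liftNC _ _ (MonoidAlgebra.single g a) = _
  rw [MonoidAlgebra.liftNC_single]
  simp only [MonoidAlgebra.singleOneRingHom, RingHom.coe_comp, Function.comp_apply]
  show MonoidAlgebra.single 1 (f p hp a) * MonoidAlgebra.single g 1 = _
  rw [MonoidAlgebra.single_mul_single, one_mul, mul_one]

lemma F_apply (x : MonoidAlgebra (IntLocAtPrime p hp) (Multiplicative (ZMod p)))
    (g : Multiplicative (ZMod p)) : (F p hp x).coeff g = f p hp (x.coeff g) := by
  induction x using MonoidAlgebra.induction with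
  | zero => simp
  | single_add a b v _ _ ih =>
    rw [map_add]
    show (F p hp (MonoidAlgebra.single a b) + F p hp v).coeff g = _
    rw [MonoidAlgebra.coeff_add, Finsupp.add_apply, F_single, ih, MonoidAlgebra.coeff_add,
      Finsupp.add_apply, map_add, MonoidAlgebra.coeff_single, MonoidAlgebra.coeff_single,
      Finsupp.single_apply, Finsupp.single_apply]
    by_cases h : a = g <;> simp [h]

lemma modP_idem (hp : p.Prime) (u : MonoidAlgebra (ZMod p) (Multiplicative (ZMod p)))
    (hu : u * u = u) : u = 0 ∨ u = 1 := by
  haveI : Fact p.Prime := ⟨hp⟩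
  haveI : CharP (MonoidAlgebra (ZMod p) (Multiplicative (ZMod p))) p :=
    charP_of_injective_ringHom
      (f := MonoidAlgebra.singleOneRingHom)
      (fun a b hab => by simpa using hab) p
  have hfrob : u ^ p = u := by
    have h1 : IsIdempotentElem u := hu
    calc u ^ p = u ^ ((p - 1) + 1) := by rw [Nat.sub_add_cancel hp.one_le]
    _ = u := h1.pow_succ_eq (p - 1)
  have hcard : Fintype.card (Multiplicative (ZMod p)) = p := by
    rw [Fintype.card_multiplicative, ZMod.card]
  have hgp : ∀ g : Multiplicative (ZMod p), g ^ p = 1 := fun g => by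
    have h := pow_card_eq_one (x := g)
    rwa [hcard] at h
  set s : ZMod p := ∑ g ∈ u.coeff.support, u.coeff g with hs
  have hup : u ^ p = MonoidAlgebra.single 1 s := by
    conv_lhs => rw [← MonoidAlgebra.sum_coeff_single u]
    rw [Finsupp.sum, sum_pow_char]
    calc ∑ g ∈ u.coeff.support, MonoidAlgebra.single g (u.coeff g) ^ p
        = ∑ g ∈ u.coeff.support, MonoidAlgebra.single (1 : Multiplicative (ZMod p)) (u.coeff g) :=
          Finset.sum_congr rfl (fun g _ => by
            rw [MonoidAlgebra.single_pow, hgp, ZMod.pow_card])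
      _ = MonoidAlgebra.single 1 s :=
          (map_sum (MonoidAlgebra.singleAddHom (1 : Multiplicative (ZMod p))) _ _).symm
  have hu' : u = MonoidAlgebra.single 1 s := by rw [← hup, hfrob]
  have hss : s * s = s := by
    have h2 := hu
    rw [hu', MonoidAlgebra.single_mul_single, one_mul] at h2
    exact MonoidAlgebra.single_right_injective h2
  rcases IsIdempotentElem.iff_eq_zero_or_one.mp hss with h | h
  · left; rw [hu', h]; simp
  · right; rw [hu', h, MonoidAlgebra.one_def]

lemma eq_zero_of_F_eq_zero (hp : p.Prime)
    (e : MonoidAlgebra (IntLocAtPrime p hp) (Multiplicative (ZMod p)))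
    (he : e * e = e) (h0 : F p hp e = 0) : e = 0 := by
  classical
  haveI := Int.span_singleton_prime_isPrime p hp
  haveI : Fact p.Prime := ⟨hp⟩
  haveI : IsNoetherianRing (IntLocAtPrime p hp) :=
    IsLocalization.isNoetherianRing (Ideal.span {(p : ℤ)}).primeCompl _ inferInstance
  have hcoef : ∀ g, f p hp (e.coeff g) = 0 := fun g => by
    rw [← F_apply, h0]; rfl
  have hdvd : ∀ g, ∃ c, e.coeff g = (p : IntLocAtPrime p hp) * c := fun g =>
    exists_of_f_eq_zero p hp _ (hcoef g)
  choose c hc using hdvd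
  set c' : Multiplicative (ZMod p) → IntLocAtPrime p hp :=
    fun g => if e.coeff g = 0 then 0 else c g with hc'
  set q : MonoidAlgebra (IntLocAtPrime p hp) (Multiplicative (ZMod p)) :=
    MonoidAlgebra.ofCoeff (Finsupp.onFinset e.coeff.support c' (fun g hg => by
      rw [Finsupp.mem_support_iff]
      intro h
      apply hg
      show (if e.coeff g = 0 then 0 else c g) = 0
      rw [if_pos h])) with hq
  have hp1 : ((p : ℕ) : MonoidAlgebra (IntLocAtPrime p hp) (Multiplicative (ZMod p)))
      = MonoidAlgebra.single 1 ((p : ℕ) : IntLocAtPrime p hp) := by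
    rw [← map_natCast (MonoidAlgebra.singleOneRingHom :
      IntLocAtPrime p hp →+* MonoidAlgebra (IntLocAtPrime p hp) (Multiplicative (ZMod p))) p]
    rfl
  have heq : e = (p : MonoidAlgebra (IntLocAtPrime p hp) (Multiplicative (ZMod p))) * q := by
    ext g
    rw [hp1, MonoidAlgebra.coeff_single_one_mul]
    show e.coeff g = ((p : ℕ) : IntLocAtPrime p hp) * c' g
    by_cases h : e.coeff g = 0
    · rw [h, hc']; simp [h]
    · rw [hc']; simp only [h, if_false]; exact hc g
  have hmem : ∀ g, ∀ n : ℕ, e.coeff g ∈ (Ideal.span {((p:ℕ) : IntLocAtPrime p hp)}) ^ n := by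
    intro g n
    have hen : e = e ^ (n + 1) := ((IsIdempotentElem.pow_succ_eq n he)).symm
    have : e = ((p : MonoidAlgebra (IntLocAtPrime p hp) (Multiplicative (ZMod p)))) ^ (n+1)
        * q ^ (n+1) := by
      rw [hen, heq, mul_pow]
    have hg : e.coeff g = ((p : ℕ) : IntLocAtPrime p hp) ^ (n+1) * (q ^ (n+1)).coeff g := by
      conv_lhs => rw [this]
      rw [hp1, MonoidAlgebra.single_pow, one_pow, MonoidAlgebra.coeff_single_one_mul]
    have : e.coeff g ∈ (Ideal.span {((p:ℕ) : IntLocAtPrime p hp)}) ^ (n + 1) := by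
      rw [Ideal.span_singleton_pow, Ideal.mem_span_singleton]
      exact ⟨(q ^ (n+1)).coeff g, hg⟩
    exact Ideal.pow_le_pow_right (Nat.le_succ n) this
  have hne : Ideal.span {((p:ℕ) : IntLocAtPrime p hp)} ≠ ⊤ := by
    intro htop
    have hunit : IsUnit ((p : ℕ) : IntLocAtPrime p hp) := by
      rw [← Ideal.span_singleton_eq_top]; exact htop
    rw [show ((p : ℕ) : IntLocAtPrime p hp) = algebraMap ℤ _ ((p : ℕ) : ℤ) by
      rw [map_natCast]] at hunit
    have := (IsLocalization.AtPrime.isUnit_to_map_iff (IntLocAtPrime p hp)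
      (Ideal.span {(p : ℤ)}) ((p : ℕ) : ℤ)).mp hunit
    exact this (Ideal.mem_span_singleton_self _)
  have hbot := Ideal.iInf_pow_eq_bot_of_isDomain
    (I := Ideal.span {((p:ℕ) : IntLocAtPrime p hp)}) hne
  ext g
  have : e.coeff g ∈ (⊥ : Ideal (IntLocAtPrime p hp)) := by
    rw [← hbot, Ideal.mem_iInf]; exact fun n => hmem g n
  simpa using this

end GpAlgAux

end main


/-- For a prime `p`, the group algebra `ℤ_(p)[C_p]` has no idempotent elements
other than `0` and `1`. -/
theorem groupAlgebra_localization_atPrime_idempotents (p : ℕ) (hp : p.Prime)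
    (e : MonoidAlgebra (IntLocAtPrime p hp) (Multiplicative (ZMod p)))
    (he : e * e = e) : e = 0 ∨ e = 1 := by
  have hu : GpAlgAux.F p hp e * GpAlgAux.F p hp e = GpAlgAux.F p hp e := by
    rw [← map_mul, he]
  rcases GpAlgAux.modP_idem p hp _ hu with h | h
  · left; exact GpAlgAux.eq_zero_of_F_eq_zero p hp e he h
  · right
    have he' : (1 - e) * (1 - e) = 1 - e := by linear_combination he
    have h0 : GpAlgAux.F p hp (1 - e) = 0 := by rw [map_sub, map_one, h, sub_self]
    have := GpAlgAux.eq_zero_of_F_eq_zero p hp (1 - e) he' h0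
    linear_combination -this
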